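/- The presented group G₁ = ⟨a, b | a*b*a = b*a*b, a^2 = b*a^2*b, a^4 = 1⟩ is isomorphic to the symmetric group S₄ (the group of permutations of a four-element set). -/

import Mathlib

/-- The three relators of the presentation
`⟨a, b | a*b*a = b*a*b, a^2 = b*a^2*b, a^4 = 1⟩`, as elements of the free group
on two generators `a = FreeGroup.of 0`, `b = FreeGroup.of 1`. -/
def rotOctahedralRels : Set (FreeGroup (Fin 2)) :=
  { (FreeGroup.of 0 * FreeGroup.of 1 * FreeGroup.of 0) *
      (FreeGroup.of 1 * FreeGroup.of 0 * FreeGroup.of 1)⁻¹,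
    (FreeGroup.of 0) ^ 2 * (FreeGroup.of 1 * (FreeGroup.of 0) ^ 2 * FreeGroup.of 1)⁻¹,
    (FreeGroup.of 0) ^ 4 }

namespace RotOct

abbrev G := PresentedGroup rotOctahedralRels

private def x : G := PresentedGroup.of 0
private def y : G := PresentedGroup.of 1

private lemma rel_mk {r : FreeGroup (Fin 2)} (hr : r ∈ rotOctahedralRels) :
    PresentedGroup.mk rotOctahedralRels r = 1 :=
  (QuotientGroup.eq_one_iff r).mpr (Subgroup.subset_normalClosure hr)

private lemma r1 : x * y * x = y * x * y := by
  have h := rel_mk (Set.mem_insert _ _)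
  rw [map_mul, map_inv, mul_inv_eq_one] at h
  simpa [map_mul, x, y, PresentedGroup.of] using h

private lemma r2 : y * x * x * y = x * x := by
  have h := rel_mk (Set.mem_insert_of_mem _ (Set.mem_insert _ _))
  rw [map_mul, map_inv, mul_inv_eq_one] at h
  have h2 : (x * x : G) = y * (x * x) * y := by simpa [map_mul, map_pow, pow_two, x, y, PresentedGroup.of] using h
  rw [h2]; group

private lemma r3 : x * x * x * x = 1 := by
  have h := rel_mk (Set.mem_insert_of_mem _ (Set.mem_insert_of_mem _ rfl))
  have h3 : (x : G) ^ 4 = 1 := by simpa [map_pow, x, PresentedGroup.of] using h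
  calc x * x * x * x = x ^ 4 := by
        rw [pow_succ, pow_succ, pow_succ, pow_one]
    _ = 1 := h3

private lemma hx4 : x ^ 4 = 1 := by
  calc x ^ 4 = x * x * x * x := by
        rw [pow_succ, pow_succ, pow_succ, pow_one]
    _ = 1 := r3

private lemma E2 : y * y * x = x * x * x * y * y := by
  calc y * y * x
    _ = (y) * (1 : G) * (y * x) := by group
    _ = (y) * (x * x * x * x) * (y * x) := congrArg (fun z => (y) * z * (y * x)) r3.symm
    _ = (y * x * x * x) * (x * y * x) := by group
    _ = (y * x * x * x) * (y * x * y) := congrArg (fun z => (y * x * x * x) * z) r1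
    _ = (y * x * x) * (x * y * x) * (y) := by group
    _ = (y * x * x) * (y * x * y) * (y) := congrArg (fun z => (y * x * x) * z * (y)) r1
    _ = (y * x * x * y) * (x * y * y) := by group
    _ = (x * x) * (x * y * y) := congrArg (fun z => z * (x * y * y)) r2
    _ = x * x * x * y * y := by group

private lemma E3 : y * y * y = x * x * y * x * x := by
  calc y * y * y
    _ = (y * y) * (1 : G) * (y) := by group
    _ = (y * y) * (x * x * x * x) * (y) := congrArg (fun z => (y * y) * z * (y)) r3.symm
    _ = (y * y * x) * (x * x) * (x * y) := by group
    _ = (y * y * x) * (y * x * x * y) * (x * y) := congrArg (fun z => (y * y * x) * z * (x * y)) r2.symm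
    _ = (y * y * x * y * x * x) * (y * x * y) := by group
    _ = (y * y * x * y * x * x) * (x * y * x) := congrArg (fun z => (y * y * x * y * x * x) * z) r1.symm
    _ = (y) * (y * x * y) * (x * x * x * y * x) := by group
    _ = (y) * (x * y * x) * (x * x * x * y * x) := congrArg (fun z => (y) * z * (x * x * x * y * x)) r1.symm
    _ = (y * x * y) * (x * x * x * x) * (y * x) := by group
    _ = (y * x * y) * (1 : G) * (y * x) := congrArg (fun z => (y * x * y) * z * (y * x)) r3
    _ = (y * x * y) * (y * x) := by group
    _ = (x * y * x) * (y * x) := congrArg (fun z => z * (y * x)) r1.symm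
    _ = (x) * (y * x * y) * (x) := by group
    _ = (x) * (x * y * x) * (x) := congrArg (fun z => (x) * z * (x)) r1.symm
    _ = x * x * y * x * x := by group

private lemma E6 : y * x * x * x * y = x * x * x * y * x * x * x := by
  calc y * x * x * x * y
    _ = (1 : G) * (y * x * x * x * y) := by group
    _ = (x * x * x * x) * (y * x * x * x * y) := congrArg (fun z => z * (y * x * x * x * y)) r3.symm
    _ = (x * x * x) * (x * y * x) * (x * x * y) := by group
    _ = (x * x * x) * (y * x * y) * (x * x * y) := congrArg (fun z => (x * x * x) * z * (x * x * y)) r1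
    _ = (x * x * x * y * x) * (y * x * x * y) := by group
    _ = (x * x * x * y * x) * (x * x) := congrArg (fun z => (x * x * x * y * x) * z) r2
    _ = x * x * x * y * x * x * x := by group

private lemma xinv : x⁻¹ = x * x * x := by
  apply inv_eq_of_mul_eq_one_right
  calc x * (x * x * x) = x * x * x * x := by group
    _ = 1 := r3

private lemma yinv : y⁻¹ = x * x * y * x * x := by
  apply inv_eq_of_mul_eq_one_right
  calc y * (x * x * y * x * x) = (y * x * x * y) * (x * x) := by group
    _ = (x * x) * (x * x) := by rw [r2]
    _ = x * x * x * x := by group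
    _ = 1 := r3

/-- transversal of the cyclic subgroup generated by `x`. -/
private def T : Fin 6 → G := ![1, y, y * x, y * y, y * x * x, y * x * x * x]

private lemma tab_x : ∀ j : Fin 6, ∃ (k : ℕ) (j' : Fin 6), T j * x = x ^ k * T j' := by
  intro j
  fin_cases j
  · exact ⟨1, 0, show (1 : G) * x = x ^ 1 * 1 by simp⟩
  · exact ⟨0, 2, show y * x = x ^ 0 * (y * x) by simp⟩
  · exact ⟨0, 4, show y * x * x = x ^ 0 * (y * x * x) by simp [mul_assoc]⟩
  · refine ⟨3, 3, show y * y * x = x ^ 3 * (y * y) from ?_⟩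
    rw [E2, pow_succ, pow_succ, pow_one]
    simp [mul_assoc]
  · exact ⟨0, 5, show y * x * x * x = x ^ 0 * (y * x * x * x) by simp [mul_assoc]⟩
  · refine ⟨0, 1, show y * x * x * x * x = x ^ 0 * y from ?_⟩
    calc y * x * x * x * x = y * (x * x * x * x) := by simp [mul_assoc]
      _ = y * 1 := by rw [r3]
      _ = x ^ 0 * y := by simp

private lemma tab_y : ∀ j : Fin 6, ∃ (k : ℕ) (j' : Fin 6), T j * y = x ^ k * T j' := by
  intro j
  fin_cases j
  · exact ⟨0, 1, show (1 : G) * y = x ^ 0 * y by simp⟩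
  · exact ⟨0, 3, show y * y = x ^ 0 * (y * y) by simp⟩
  · refine ⟨1, 2, show y * x * y = x ^ 1 * (y * x) from ?_⟩
    rw [← r1, pow_one]
    simp [mul_assoc]
  · refine ⟨2, 4, show y * y * y = x ^ 2 * (y * x * x) from ?_⟩
    rw [E3, pow_succ, pow_one]
    simp [mul_assoc]
  · refine ⟨2, 0, show y * x * x * y = x ^ 2 * 1 from ?_⟩
    rw [r2, pow_succ, pow_one, mul_one]
  · refine ⟨3, 5, show y * x * x * x * y = x ^ 3 * (y * x * x * x) from ?_⟩
    rw [E6, pow_succ, pow_succ, pow_one]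
    simp [mul_assoc]

private lemma mem_monoid_closure (g : G) : g ∈ Submonoid.closure ({x, y} : Set G) := by
  let H : Subgroup G :=
    { Submonoid.closure ({x, y} : Set G) with
      inv_mem' := by
        intro g hg
        induction hg using Submonoid.closure_induction with
        | mem a ha =>
          rcases ha with ha | ha
          · subst ha
            rw [xinv]
            exact Submonoid.mul_mem _ (Submonoid.mul_mem _
              (Submonoid.subset_closure (Or.inl rfl)) (Submonoid.subset_closure (Or.inl rfl)))
              (Submonoid.subset_closure (Or.inl rfl))
          · rw [Set.mem_singleton_iff] at ha
            subst ha
            rw [yinv]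
            have hx := Submonoid.subset_closure (show x ∈ ({x, y} : Set G) from Or.inl rfl)
            have hy := Submonoid.subset_closure (show y ∈ ({x, y} : Set G) from Or.inr rfl)
            exact Submonoid.mul_mem _ (Submonoid.mul_mem _ (Submonoid.mul_mem _
              (Submonoid.mul_mem _ hx hx) hy) hx) hx
        | one => simpa using Submonoid.one_mem _
        | mul a b _ _ ha hb => rw [mul_inv_rev]; exact Submonoid.mul_mem _ hb ha }
  have : g ∈ H := by
    apply PresentedGroup.generated_by rotOctahedralRels H
    intro j
    fin_cases j
    · exact Submonoid.subset_closure (Or.inl rfl)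
    · exact Submonoid.subset_closure (Or.inr rfl)
  exact this

private lemma monoid_closure_top : Submonoid.closure ({x, y} : Set G) = ⊤ :=
  top_le_iff.mp fun g _ => mem_monoid_closure g

private lemma normal_form (g : G) : ∃ (i : ℕ) (j : Fin 6), g = x ^ i * T j := by
  refine Submonoid.induction_of_closure_eq_top_right monoid_closure_top g ⟨0, 0, show (1 : G) = x ^ 0 * 1 by simp⟩ ?_
  rintro g s hs ⟨i, j, rfl⟩
  rcases hs with hs | hs
  · subst hs
    obtain ⟨k, j', hk⟩ := tab_x j
    exact ⟨i + k, j', by rw [mul_assoc, hk, ← mul_assoc, ← pow_add]⟩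
  · rw [Set.mem_singleton_iff] at hs
    subst hs
    obtain ⟨k, j', hk⟩ := tab_y j
    exact ⟨i + k, j', by rw [mul_assoc, hk, ← mul_assoc, ← pow_add]⟩

private def f24 : Fin 4 × Fin 6 → G := fun p => x ^ (p.1 : ℕ) * T p.2

private lemma f24_surj : Function.Surjective f24 := by
  intro g
  obtain ⟨i, j, rfl⟩ := normal_form g
  refine ⟨(⟨i % 4, Nat.mod_lt _ (by norm_num)⟩, j), ?_⟩
  simp only [f24]
  rw [← pow_eq_pow_mod i hx4]

/-- the image of `a`: the 4-cycle `finRotate 4`. -/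
private def sigma : Equiv.Perm (Fin 4) := finRotate 4

/-- the image of `b`. -/
private def tau : Equiv.Perm (Fin 4) :=
  ⟨fun i => ![1, 3, 0, 2] i, fun i => ![2, 0, 3, 1] i, by decide, by decide⟩

private def f2 : Fin 2 → Equiv.Perm (Fin 4) := ![sigma, tau]

private lemma rels_hold : ∀ r ∈ rotOctahedralRels, FreeGroup.lift f2 r = 1 := by
  intro r hr
  rcases hr with h | h | h <;> subst h <;>
    simp only [map_mul, map_inv, map_pow, FreeGroup.lift_apply_of] <;> decide

private def phi : G →* Equiv.Perm (Fin 4) := PresentedGroup.toGroup rels_hold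

private lemma phi_x : phi x = sigma := PresentedGroup.toGroup.of rels_hold
private lemma phi_y : phi y = tau := PresentedGroup.toGroup.of rels_hold

private lemma phi_surj : Function.Surjective phi := by
  rw [← MonoidHom.range_eq_top]
  rw [eq_top_iff, ← Equiv.Perm.closure_cycle_adjacent_swap (isCycle_finRotate (n := 2))
    (by decide) (0 : Fin 4)]
  rw [Subgroup.closure_le]
  rintro s (hs | hs)
  · exact ⟨x, by rw [phi_x, hs]; rfl⟩
  · rw [Set.mem_singleton_iff] at hs
    refine ⟨x * y * y * y * x, ?_⟩
    rw [map_mul, map_mul, map_mul, map_mul, phi_x, phi_y, hs]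
    decide

private lemma card_G : Nat.card G = 24 := by
  have hfin : Finite G := Finite.of_surjective f24 f24_surj
  have h1 : Nat.card G ≤ 24 := by
    have := Nat.card_le_card_of_surjective f24 f24_surj
    simpa using this
  have h2 : 24 ≤ Nat.card G := by
    have := Nat.card_le_card_of_surjective phi phi_surj
    simpa [Nat.card_eq_fintype_card, Fintype.card_perm, show Nat.factorial 4 = 24 from rfl] using this
  omega

private lemma phi_bij : Function.Bijective phi := by
  have hfin : Finite G := Finite.of_surjective f24 f24_surj
  rw [Nat.bijective_iff_surjective_and_card]
  refine ⟨phi_surj, ?_⟩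
  rw [card_G]
  simp [Nat.card_eq_fintype_card, Fintype.card_perm]
  rfl

end RotOct

theorem stmt_6 :
    Nonempty (PresentedGroup rotOctahedralRels ≃* Equiv.Perm (Fin 4)) :=
  ⟨MulEquiv.ofBijective RotOct.phi RotOct.phi_bij⟩
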